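/- Let φ : R → Q be an injective ring epimorphism with Q flat as a left R-module, K = Q/φ(R). Then a right R-module M is both torsion (M ⊗_R Q = 0) and h-divisible (a homomorphic image of a direct sum of copies of Q) if and only if M is generated by K, i.e., M is a homomorphic image of a direct sum of copies of K. -/

import Mathlib

open MulOpposite

universe u

/-- `φ : R →+* Q` is an epimorphism in the category of rings. -/
def IsRingEpi {R Q : Type u} [Ring R] [Ring Q] (φ : R →+* Q) : Prop :=
  ∀ (T : Type u) [Ring T] (ψ ω : Q →+* T), ψ.comp φ = ω.comp φ → ψ = ω

section NCTensor

variable (R : Type u) [Ring R] (M : Type u) [AddCommGroup M] [Module Rᵐᵒᵖ M]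
  (N : Type u) [AddCommGroup N] [Module R N]

/-- Relations defining the tensor product `M ⊗_R N` of a right `R`-module `M`
and a left `R`-module `N` over a (possibly noncommutative) ring `R`. -/
def ncRels : AddSubgroup (FreeAbelianGroup (M × N)) :=
  AddSubgroup.closure
    ({x | ∃ m m' n, x = FreeAbelianGroup.of (m + m', n) - FreeAbelianGroup.of (m, n) -
        FreeAbelianGroup.of (m', n)} ∪
     {x | ∃ m n n', x = FreeAbelianGroup.of (m, n + n') - FreeAbelianGroup.of (m, n) -
        FreeAbelianGroup.of (m, n')} ∪
     {x | ∃ (r : R) (m : M) (n : N), x = FreeAbelianGroup.of (op r • m, n) -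
        FreeAbelianGroup.of (m, r • n)})

/-- The tensor product `M ⊗_R N` of a right `R`-module and a left `R`-module over a
(possibly noncommutative) ring `R`, as an abelian group. -/
def NCTensor : Type u := FreeAbelianGroup (M × N) ⧸ ncRels R M N

instance : AddCommGroup (NCTensor R M N) :=
  QuotientAddGroup.Quotient.addCommGroup _

/-- The pure tensor `m ⊗ n` in `M ⊗_R N`. -/
def NCTensor.tmul (m : M) (n : N) : NCTensor R M N :=
  QuotientAddGroup.mk (FreeAbelianGroup.of (m, n))

end NCTensor

/-- A left `R`-module `N` is flat if tensoring right `R`-modules with `N`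
preserves injectivity. -/
def IsFlatLeftModule (R : Type u) [Ring R] (N : Type u) [AddCommGroup N] [Module R N] : Prop :=
  ∀ (A B : Type u) [AddCommGroup A] [AddCommGroup B] [Module Rᵐᵒᵖ A] [Module Rᵐᵒᵖ B]
    (i : A →ₗ[Rᵐᵒᵖ] B), Function.Injective i →
    ∀ g : NCTensor R A N →+ NCTensor R B N,
      (∀ a n, g (NCTensor.tmul R A N a n) = NCTensor.tmul R B N (i a) n) →
      Function.Injective g

section Kmod

variable {R Q : Type u} [Ring R] [Ring Q] (φ : R →+* Q) [Module Rᵐᵒᵖ Q]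
  (hr : ∀ (r : R) (q : Q), op r • q = q * φ r)

/-- The image of `φ`, as a submodule of the right `R`-module `Q`. -/
def phiRange : Submodule Rᵐᵒᵖ Q where
  carrier := Set.range φ
  add_mem' := by rintro x y ⟨a, rfl⟩ ⟨b, rfl⟩; exact ⟨a + b, map_add φ a b⟩
  zero_mem' := ⟨0, map_zero φ⟩
  smul_mem' := by
    rintro c x ⟨a, rfl⟩
    refine ⟨a * c.unop, ?_⟩
    rw [map_mul]
    conv_rhs => rw [← MulOpposite.op_unop c, hr]

/-- `K = Q/φ(R)` as a right `R`-module. -/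
abbrev Kmod := Q ⧸ phiRange φ hr

end Kmod

section LiftInfra

variable {R M N A : Type u} [Ring R] [AddCommGroup M] [Module Rᵐᵒᵖ M]
  [AddCommGroup N] [Module R N] [AddCommGroup A]

/-- Lift a balanced biadditive map to the tensor product. -/
def NCTensor.lift (b : M → N → A)
    (h1 : ∀ m m' n, b (m + m') n = b m n + b m' n)
    (h2 : ∀ m n n', b m (n + n') = b m n + b m n')
    (h3 : ∀ (r : R) m n, b (op r • m) n = b m (r • n)) :
    NCTensor R M N →+ A :=
  QuotientAddGroup.lift (ncRels R M N)
    (FreeAbelianGroup.lift (fun p : M × N => b p.1 p.2)) (by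
      intro x hx
      have : ncRels R M N ≤ (FreeAbelianGroup.lift (fun p : M × N => b p.1 p.2)).ker := by
        refine AddSubgroup.closure_le _ |>.2 ?_
        rintro y (((⟨m, m', n, rfl⟩ | ⟨m, n, n', rfl⟩) | ⟨r, m, n, rfl⟩)) <;>
          simp [AddMonoidHom.mem_ker, FreeAbelianGroup.lift_apply_of, h1, h2, h3, sub_eq_zero,
            sub_add_eq_sub_sub]
      · simpa [AddMonoidHom.mem_ker] using this hx)

theorem NCTensor.lift_tmul (b : M → N → A) (h1) (h2) (h3) (m : M) (n : N) :
    NCTensor.lift b h1 h2 h3 (NCTensor.tmul R M N m n) = b m n := by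
  show QuotientAddGroup.lift _ _ _ (QuotientAddGroup.mk _) = _
  rw [QuotientAddGroup.lift_mk]
  exact FreeAbelianGroup.lift_apply_of _ _

end LiftInfra

section TmulInfra

variable {R M N : Type u} [Ring R] [AddCommGroup M] [Module Rᵐᵒᵖ M]
  [AddCommGroup N] [Module R N]

theorem NCTensor.mk_eq_mk {x y : FreeAbelianGroup (M × N)} (h : x - y ∈ ncRels R M N) :
    (QuotientAddGroup.mk x : NCTensor R M N) = QuotientAddGroup.mk y :=
  (QuotientAddGroup.eq_iff_sub_mem).2 h

theorem NCTensor.tmul_add_left (m m' : M) (n : N) :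
    NCTensor.tmul R M N (m + m') n = NCTensor.tmul R M N m n + NCTensor.tmul R M N m' n := by
  show QuotientAddGroup.mk _ = QuotientAddGroup.mk (_ + _)
  refine NCTensor.mk_eq_mk ?_
  refine AddSubgroup.subset_closure (Or.inl (Or.inl ⟨m, m', n, ?_⟩))
  abel

theorem NCTensor.tmul_add_right (m : M) (n n' : N) :
    NCTensor.tmul R M N m (n + n') = NCTensor.tmul R M N m n + NCTensor.tmul R M N m n' := by
  show QuotientAddGroup.mk _ = QuotientAddGroup.mk (_ + _)
  refine NCTensor.mk_eq_mk ?_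
  refine AddSubgroup.subset_closure (Or.inl (Or.inr ⟨m, n, n', ?_⟩))
  abel

theorem NCTensor.tmul_smul (r : R) (m : M) (n : N) :
    NCTensor.tmul R M N (op r • m) n = NCTensor.tmul R M N m (r • n) := by
  refine NCTensor.mk_eq_mk ?_
  exact AddSubgroup.subset_closure (Or.inr ⟨r, m, n, rfl⟩)

theorem NCTensor.tmul_zero_left (n : N) : NCTensor.tmul R M N 0 n = 0 := by
  have := NCTensor.tmul_add_left (R := R) (0 : M) 0 n
  rw [add_zero] at this
  exact add_right_cancel (this.symm.trans (zero_add _).symm)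

theorem NCTensor.tmul_zero_right (m : M) : NCTensor.tmul R M N m 0 = 0 := by
  have := NCTensor.tmul_add_right (R := R) m (0 : N) 0
  rw [add_zero] at this
  exact add_right_cancel (this.symm.trans (zero_add _).symm)

theorem NCTensor.tmul_neg_left (m : M) (n : N) :
    NCTensor.tmul R M N (-m) n = -NCTensor.tmul R M N m n := by
  have := NCTensor.tmul_add_left (R := R) m (-m) n
  rw [add_neg_cancel, NCTensor.tmul_zero_left] at this
  exact (neg_eq_of_add_eq_zero_right this.symm).symm

theorem NCTensor.tmul_sub_left (m m' : M) (n : N) :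
    NCTensor.tmul R M N (m - m') n = NCTensor.tmul R M N m n - NCTensor.tmul R M N m' n := by
  rw [sub_eq_add_neg, sub_eq_add_neg, NCTensor.tmul_add_left, NCTensor.tmul_neg_left]

@[elab_as_elim]
theorem NCTensor.induction_on {p : NCTensor R M N → Prop} (z : NCTensor R M N)
    (zero : p 0) (tm : ∀ m n, p (NCTensor.tmul R M N m n))
    (neg : ∀ x, p x → p (-x)) (add : ∀ x y, p x → p y → p (x + y)) : p z := by
  obtain ⟨w, rfl⟩ := QuotientAddGroup.mk_surjective z
  refine FreeAbelianGroup.induction_on w ?_ ?_ ?_ ?_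
  · exact zero
  · exact fun x => tm x.1 x.2
  · intro x hx
    have : (QuotientAddGroup.mk (-FreeAbelianGroup.of x) : NCTensor R M N) =
        -(QuotientAddGroup.mk (FreeAbelianGroup.of x)) := rfl
    rw [this]; exact neg _ hx
  · intro x y hx hy
    have : (QuotientAddGroup.mk (x + y) : NCTensor R M N) =
        QuotientAddGroup.mk x + QuotientAddGroup.mk y := rfl
    rw [this]; exact add _ _ hx hy

theorem NCTensor.hom_ext {A : Type u} [AddCommGroup A] {f g : NCTensor R M N →+ A}
    (h : ∀ m n, f (NCTensor.tmul R M N m n) = g (NCTensor.tmul R M N m n)) : f = g := by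
  ext z
  refine NCTensor.induction_on z (by simp) h ?_ ?_
  · intro x hx; rw [map_neg, map_neg, hx]
  · intro x y hx hy; rw [map_add, map_add, hx, hy]

end TmulInfra

section EpiKey

variable {R Q : Type u} [Ring R] [Ring Q] (φ : R →+* Q) [Module Rᵐᵒᵖ Q]
  (hr : ∀ (r : R) (q : Q), op r • q = q * φ r)
  [Module R Q] (hl : ∀ (r : R) (q : Q), r • q = φ r * q)

/-- Left multiplication by `a : Q` on `Q ⊗_R Q`. -/
def NCTensor.lmul (a : Q) : NCTensor R Q Q →+ NCTensor R Q Q :=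
  NCTensor.lift (fun x y => NCTensor.tmul R Q Q (a * x) y)
    (fun m m' n => by rw [mul_add, NCTensor.tmul_add_left])
    (fun m n n' => by rw [NCTensor.tmul_add_right])
    (fun r m n => by rw [hr, ← mul_assoc, ← hr, NCTensor.tmul_smul])

/-- Right multiplication by `b : Q` on `Q ⊗_R Q`. -/
def NCTensor.rmul (b : Q) : NCTensor R Q Q →+ NCTensor R Q Q :=
  NCTensor.lift (fun x y => NCTensor.tmul R Q Q x (y * b))
    (fun m m' n => by rw [NCTensor.tmul_add_left])
    (fun m n n' => by rw [add_mul, NCTensor.tmul_add_right])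
    (fun r m n => by rw [NCTensor.tmul_smul, hl, hl, mul_assoc])

theorem NCTensor.lmul_tmul (a x y : Q) :
    NCTensor.lmul φ hr a (NCTensor.tmul R Q Q x y) = NCTensor.tmul R Q Q (a * x) y :=
  NCTensor.lift_tmul _ _ _ _ _ _

theorem NCTensor.rmul_tmul (b x y : Q) :
    NCTensor.rmul φ hl b (NCTensor.tmul R Q Q x y) = NCTensor.tmul R Q Q x (y * b) :=
  NCTensor.lift_tmul _ _ _ _ _ _

end EpiKey

theorem epi_key {R Q : Type u} [Ring R] [Ring Q] (φ : R →+* Q) [Module Rᵐᵒᵖ Q]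
    (hr : ∀ (r : R) (q : Q), op r • q = q * φ r)
    [Module R Q] (hl : ∀ (r : R) (q : Q), r • q = φ r * q)
    (hepi : IsRingEpi φ) (q' q : Q) :
    NCTensor.tmul R Q Q q' q = NCTensor.tmul R Q Q 1 (q' * q) := by
  set P := Q × NCTensor R Q Q with hP
  -- pointwise auxiliary lemmas about lmul/rmul
  have lmul_lmul : ∀ (a b : Q) (z : NCTensor R Q Q),
      NCTensor.lmul φ hr a (NCTensor.lmul φ hr b z) = NCTensor.lmul φ hr (a * b) z := by
    intro a b z
    refine DFunLike.congr_fun (NCTensor.hom_ext (f := (NCTensor.lmul φ hr a).comp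
      (NCTensor.lmul φ hr b)) (g := NCTensor.lmul φ hr (a * b)) ?_) z
    intro m n
    simp [NCTensor.lmul_tmul, mul_assoc]
  have rmul_rmul : ∀ (a b : Q) (z : NCTensor R Q Q),
      NCTensor.rmul φ hl a (NCTensor.rmul φ hl b z) = NCTensor.rmul φ hl (b * a) z := by
    intro a b z
    refine DFunLike.congr_fun (NCTensor.hom_ext (f := (NCTensor.rmul φ hl a).comp
      (NCTensor.rmul φ hl b)) (g := NCTensor.rmul φ hl (b * a)) ?_) z
    intro m n
    simp [NCTensor.rmul_tmul, mul_assoc]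
  have lmul_rmul : ∀ (a b : Q) (z : NCTensor R Q Q),
      NCTensor.lmul φ hr a (NCTensor.rmul φ hl b z) = NCTensor.rmul φ hl b (NCTensor.lmul φ hr a z) := by
    intro a b z
    refine DFunLike.congr_fun (NCTensor.hom_ext (f := (NCTensor.lmul φ hr a).comp
      (NCTensor.rmul φ hl b)) (g := (NCTensor.rmul φ hl b).comp (NCTensor.lmul φ hr a)) ?_) z
    intro m n
    simp [NCTensor.rmul_tmul, NCTensor.lmul_tmul]
  have lmul_one : ∀ z, NCTensor.lmul φ hr (1 : Q) z = z := by
    intro z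
    refine DFunLike.congr_fun (NCTensor.hom_ext (f := NCTensor.lmul φ hr (1 : Q))
      (g := AddMonoidHom.id _) ?_) z
    intro m n; simp [NCTensor.lmul_tmul]
  have rmul_one : ∀ z, NCTensor.rmul φ hl (1 : Q) z = z := by
    intro z
    refine DFunLike.congr_fun (NCTensor.hom_ext (f := NCTensor.rmul φ hl (1 : Q))
      (g := AddMonoidHom.id _) ?_) z
    intro m n; simp [NCTensor.rmul_tmul]
  have lmul_add : ∀ (a b : Q) (z : NCTensor R Q Q),
      NCTensor.lmul φ hr (a + b) z = NCTensor.lmul φ hr a z + NCTensor.lmul φ hr b z := by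
    intro a b z
    refine DFunLike.congr_fun (NCTensor.hom_ext (f := NCTensor.lmul φ hr (a + b))
      (g := NCTensor.lmul φ hr a + NCTensor.lmul φ hr b) ?_) z
    intro m n
    simp [NCTensor.lmul_tmul, add_mul, NCTensor.tmul_add_left]
  have rmul_add : ∀ (a b : Q) (z : NCTensor R Q Q),
      NCTensor.rmul φ hl (a + b) z = NCTensor.rmul φ hl a z + NCTensor.rmul φ hl b z := by
    intro a b z
    refine DFunLike.congr_fun (NCTensor.hom_ext (f := NCTensor.rmul φ hl (a + b))
      (g := NCTensor.rmul φ hl a + NCTensor.rmul φ hl b) ?_) z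
    intro m n
    simp [NCTensor.rmul_tmul, mul_add, NCTensor.tmul_add_right]
  have lmul_zero : ∀ z, NCTensor.lmul φ hr (0 : Q) z = 0 := by
    intro z
    refine DFunLike.congr_fun (NCTensor.hom_ext (f := NCTensor.lmul φ hr (0 : Q)) (g := 0) ?_) z
    intro m n; simp [NCTensor.lmul_tmul, NCTensor.tmul_zero_left]
  have rmul_zero : ∀ z, NCTensor.rmul φ hl (0 : Q) z = 0 := by
    intro z
    refine DFunLike.congr_fun (NCTensor.hom_ext (f := NCTensor.rmul φ hl (0 : Q)) (g := 0) ?_) z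
    intro m n; simp [NCTensor.rmul_tmul, NCTensor.tmul_zero_right]
  letI ringP : Ring P :=
    { (inferInstance : AddCommGroup P) with
      mul := fun x y => (x.1 * y.1, NCTensor.lmul φ hr x.1 y.2 + NCTensor.rmul φ hl y.1 x.2)
      one := ((1 : Q), 0)
      mul_assoc := by
        rintro ⟨a, x⟩ ⟨b, y⟩ ⟨c, z⟩
        refine Prod.ext (mul_assoc a b c) ?_
        show NCTensor.lmul φ hr (a * b) z + NCTensor.rmul φ hl c (NCTensor.lmul φ hr a y +
            NCTensor.rmul φ hl b x) = NCTensor.lmul φ hr a (NCTensor.lmul φ hr b z +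
            NCTensor.rmul φ hl c y) + NCTensor.rmul φ hl (b * c) x
        rw [map_add, map_add, ← lmul_lmul, ← rmul_rmul, lmul_rmul]
        abel
      one_mul := by
        rintro ⟨a, x⟩
        refine Prod.ext (one_mul a) ?_
        show NCTensor.lmul φ hr 1 x + NCTensor.rmul φ hl a 0 = x
        rw [lmul_one, map_zero, add_zero]
      mul_one := by
        rintro ⟨a, x⟩
        refine Prod.ext (mul_one a) ?_
        show NCTensor.lmul φ hr a 0 + NCTensor.rmul φ hl 1 x = x
        rw [rmul_one, map_zero, zero_add]
      left_distrib := by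
        rintro ⟨a, x⟩ ⟨b, y⟩ ⟨c, z⟩
        refine Prod.ext (mul_add a b c) ?_
        show NCTensor.lmul φ hr a (y + z) + NCTensor.rmul φ hl (b + c) x =
          NCTensor.lmul φ hr a y + NCTensor.rmul φ hl b x +
          (NCTensor.lmul φ hr a z + NCTensor.rmul φ hl c x)
        rw [map_add, rmul_add]
        abel
      right_distrib := by
        rintro ⟨a, x⟩ ⟨b, y⟩ ⟨c, z⟩
        refine Prod.ext (add_mul a b c) ?_
        show NCTensor.lmul φ hr (a + b) z + NCTensor.rmul φ hl c (x + y) =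
          NCTensor.lmul φ hr a z + NCTensor.rmul φ hl c x +
          (NCTensor.lmul φ hr b z + NCTensor.rmul φ hl c y)
        rw [map_add, lmul_add]
        abel
      zero_mul := by
        rintro ⟨a, x⟩
        refine Prod.ext (zero_mul a) ?_
        show NCTensor.lmul φ hr 0 x + NCTensor.rmul φ hl a 0 = 0
        rw [lmul_zero, map_zero, add_zero]
      mul_zero := by
        rintro ⟨a, x⟩
        refine Prod.ext (mul_zero a) ?_
        show NCTensor.lmul φ hr a 0 + NCTensor.rmul φ hl 0 x = 0
        rw [rmul_zero, map_zero, add_zero] }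
  -- the two ring homs
  have hmulP : ∀ x y : P, x * y = (x.1 * y.1,
      NCTensor.lmul φ hr x.1 y.2 + NCTensor.rmul φ hl y.1 x.2) := fun _ _ => rfl
  have honeP : (1 : P) = ((1 : Q), 0) := rfl
  let ψ : Q →+* P :=
    { toFun := fun a => (a, NCTensor.tmul R Q Q a 1 - NCTensor.tmul R Q Q 1 a)
      map_one' := by simp [honeP]
      map_mul' := by
        intro a b
        rw [hmulP]
        refine Prod.ext rfl ?_
        show NCTensor.tmul R Q Q (a * b) 1 - NCTensor.tmul R Q Q 1 (a * b) =
            NCTensor.lmul φ hr a (NCTensor.tmul R Q Q b 1 - NCTensor.tmul R Q Q 1 b) +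
            NCTensor.rmul φ hl b (NCTensor.tmul R Q Q a 1 - NCTensor.tmul R Q Q 1 a)
        rw [map_sub, map_sub, NCTensor.lmul_tmul, NCTensor.lmul_tmul, NCTensor.rmul_tmul,
          NCTensor.rmul_tmul, mul_one, one_mul]
        abel
      map_zero' := by
        refine Prod.ext rfl ?_
        show NCTensor.tmul R Q Q 0 1 - NCTensor.tmul R Q Q 1 0 = 0
        rw [NCTensor.tmul_zero_left, NCTensor.tmul_zero_right, sub_zero]
      map_add' := by
        intro a b
        refine Prod.ext rfl ?_
        show NCTensor.tmul R Q Q (a + b) 1 - NCTensor.tmul R Q Q 1 (a + b) =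
          NCTensor.tmul R Q Q a 1 - NCTensor.tmul R Q Q 1 a +
          (NCTensor.tmul R Q Q b 1 - NCTensor.tmul R Q Q 1 b)
        rw [NCTensor.tmul_add_left, NCTensor.tmul_add_right]
        abel }
  let ω : Q →+* P :=
    { toFun := fun a => (a, 0)
      map_one' := rfl
      map_mul' := by
        intro a b
        rw [hmulP]
        refine Prod.ext rfl ?_
        show (0 : NCTensor R Q Q) = NCTensor.lmul φ hr a 0 + NCTensor.rmul φ hl b 0
        rw [map_zero, map_zero, add_zero]
      map_zero' := rfl
      map_add' := by
        intro a b
        refine Prod.ext rfl ?_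
        show (0 : NCTensor R Q Q) = 0 + 0
        rw [add_zero] }
  have hcomp : ψ.comp φ = ω.comp φ := by
    refine RingHom.ext fun r => ?_
    show (φ r, NCTensor.tmul R Q Q (φ r) 1 - NCTensor.tmul R Q Q 1 (φ r)) = (φ r, (0 : NCTensor R Q Q))
    refine Prod.ext rfl ?_
    show NCTensor.tmul R Q Q (φ r) 1 - NCTensor.tmul R Q Q 1 (φ r) = 0
    have h1 : (φ r : Q) = op r • (1 : Q) := by rw [hr, one_mul]
    have h2 : (φ r : Q) = r • (1 : Q) := by rw [hl, mul_one]
    rw [sub_eq_zero]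
    conv_lhs => rw [h1]
    rw [NCTensor.tmul_smul, ← h2]
  have hψω := hepi P ψ ω hcomp
  have key1 : ∀ a : Q, NCTensor.tmul R Q Q a 1 = NCTensor.tmul R Q Q 1 a := by
    intro a
    have := congrArg Prod.snd (congrArg (fun f : Q →+* P => f a) hψω)
    simpa [ψ, ω, sub_eq_zero] using this
  have := congrArg (NCTensor.rmul φ hl q) (key1 q')
  rwa [NCTensor.rmul_tmul, NCTensor.rmul_tmul, one_mul] at this

theorem genK_tmul_zero {R Q : Type u} [Ring R] [Ring Q] (φ : R →+* Q) [Module Rᵐᵒᵖ Q]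
    (hr : ∀ (r : R) (q : Q), op r • q = q * φ r)
    [Module R Q] (hl : ∀ (r : R) (q : Q), r • q = φ r * q)
    (hepi : IsRingEpi φ)
    {M : Type u} [AddCommGroup M] [Module Rᵐᵒᵖ M]
    (e : Kmod φ hr →ₗ[Rᵐᵒᵖ] M) (k : Kmod φ hr) (q : Q) :
    NCTensor.tmul R M Q (e k) q = 0 := by
  obtain ⟨q', rfl⟩ := Submodule.mkQ_surjective _ k
  have h1 := congrArg (NCTensor.lift
      (fun a b => NCTensor.tmul R M Q (e ((phiRange φ hr).mkQ a)) b)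
      (fun m m' n => by rw [map_add, map_add, NCTensor.tmul_add_left])
      (fun m n n' => by rw [NCTensor.tmul_add_right])
      (fun r m n => by rw [map_smul, map_smul, NCTensor.tmul_smul]))
    (epi_key φ hr hl hepi q' q)
  rw [NCTensor.lift_tmul, NCTensor.lift_tmul] at h1
  have h2 : (phiRange φ hr).mkQ 1 = 0 := by
    rw [Submodule.mkQ_apply]
    exact (Submodule.Quotient.mk_eq_zero _).2 ⟨1, map_one φ⟩
  rw [h2, map_zero, NCTensor.tmul_zero_left] at h1
  exact h1

theorem subsingleton_of_genK {R Q : Type u} [Ring R] [Ring Q] (φ : R →+* Q) [Module Rᵐᵒᵖ Q]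
    (hr : ∀ (r : R) (q : Q), op r • q = q * φ r)
    [Module R Q] (hl : ∀ (r : R) (q : Q), r • q = φ r * q)
    (hepi : IsRingEpi φ)
    {M : Type u} [AddCommGroup M] [Module Rᵐᵒᵖ M] {I : Type u}
    (h : (I →₀ Kmod φ hr) →ₗ[Rᵐᵒᵖ] M) (hs : Function.Surjective h) :
    Subsingleton (NCTensor R M Q) := by
  have key : ∀ m q, NCTensor.tmul R M Q m q = 0 := by
    intro m q
    obtain ⟨x, rfl⟩ := hs m
    induction x using Finsupp.induction with
    | zero => rw [map_zero, NCTensor.tmul_zero_left]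
    | single_add i k x _ _ ih =>
      rw [map_add, NCTensor.tmul_add_left, ih, add_zero]
      have hsk : h (Finsupp.single i k) = (h.comp (Finsupp.lsingle i)) k := by
        rw [LinearMap.comp_apply, Finsupp.lsingle_apply]
      rw [hsk]
      exact genK_tmul_zero φ hr hl hepi _ k q
  refine subsingleton_of_forall_eq 0 fun z => ?_
  refine NCTensor.induction_on z rfl key ?_ ?_
  · intro x hx; rw [hx, neg_zero]
  · intro x y hx hy; rw [hx, hy, add_zero]

theorem genQ_of_genK {R Q : Type u} [Ring R] [Ring Q] (φ : R →+* Q) [Module Rᵐᵒᵖ Q]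
    (hr : ∀ (r : R) (q : Q), op r • q = q * φ r)
    {M : Type u} [AddCommGroup M] [Module Rᵐᵒᵖ M] {I : Type u}
    (h : (I →₀ Kmod φ hr) →ₗ[Rᵐᵒᵖ] M) (hs : Function.Surjective h) :
    ∃ (g : (I →₀ Q) →ₗ[Rᵐᵒᵖ] M), Function.Surjective g := by
  refine ⟨h.comp (Finsupp.mapRange.linearMap (phiRange φ hr).mkQ), fun m => ?_⟩
  obtain ⟨x, rfl⟩ := hs m
  obtain ⟨y, hy⟩ := Finsupp.mapRange_surjective (⇑((phiRange φ hr).mkQ)) (map_zero _)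
    (Submodule.mkQ_surjective _) x
  refine ⟨y, ?_⟩
  rw [LinearMap.comp_apply, Finsupp.mapRange.linearMap_apply, hy]

theorem genK_of_torsion_genQ {R Q : Type u} [Ring R] [Ring Q] (φ : R →+* Q) [Module Rᵐᵒᵖ Q]
    (hr : ∀ (r : R) (q : Q), op r • q = q * φ r)
    [Module R Q] (hl : ∀ (r : R) (q : Q), r • q = φ r * q)
    {M : Type u} [AddCommGroup M] [Module Rᵐᵒᵖ M]
    (hsub : Subsingleton (NCTensor R M Q)) {I : Type u}
    (g : (I →₀ Q) →ₗ[Rᵐᵒᵖ] M) (hg : Function.Surjective g) :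
    ∃ (J : Type u) (h : (J →₀ Kmod φ hr) →ₗ[Rᵐᵒᵖ] M), Function.Surjective h := by
  classical
  set J := Kmod φ hr →ₗ[Rᵐᵒᵖ] M with hJ
  set h : (J →₀ Kmod φ hr) →ₗ[Rᵐᵒᵖ] M := Finsupp.lsum ℕ (fun f : J => f) with hh
  refine ⟨J, h, fun m => ?_⟩
  -- the subgroup generated by tensors with first entry in the kernel of g
  set S : AddSubgroup (NCTensor R (I →₀ Q) Q) :=
    AddSubgroup.closure {z | ∃ x, g x = 0 ∧ ∃ q, z = NCTensor.tmul R (I →₀ Q) Q x q} with hS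
  set sI : M → (I →₀ Q) := Function.surjInv hg with hsI
  have hgsI : ∀ m, g (sI m) = m := fun m => Function.surjInv_eq hg m
  have claim1 : ∀ (v w : I →₀ Q) (q : Q), g v = g w →
      (QuotientAddGroup.mk (NCTensor.tmul R (I →₀ Q) Q v q) : _ ⧸ S) =
      QuotientAddGroup.mk (NCTensor.tmul R (I →₀ Q) Q w q) := by
    intro v w q hvw
    refine (QuotientAddGroup.eq_iff_sub_mem).2 ?_
    rw [← NCTensor.tmul_sub_left]
    exact AddSubgroup.subset_closure ⟨v - w, by rw [map_sub, hvw, sub_self], q, rfl⟩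
  -- the map β : M ⊗ Q → (tensor)/S
  set β : NCTensor R M Q →+ (NCTensor R (I →₀ Q) Q) ⧸ S :=
    NCTensor.lift (fun m q => QuotientAddGroup.mk (NCTensor.tmul R (I →₀ Q) Q (sI m) q))
      (fun m m' q => by
        rw [claim1 (sI (m + m')) (sI m + sI m') q
          (by rw [map_add, hgsI, hgsI, hgsI]), NCTensor.tmul_add_left]
        rfl)
      (fun m q q' => by rw [NCTensor.tmul_add_right]; rfl)
      (fun r m q => by
        rw [claim1 (sI (op r • m)) (op r • sI m) q
          (by rw [map_smul, hgsI, hgsI]), NCTensor.tmul_smul]) with hβ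
  -- the map γ : (I →₀ Q) ⊗ Q → M ⊗ Q induced by g
  set γ : NCTensor R (I →₀ Q) Q →+ NCTensor R M Q :=
    NCTensor.lift (fun v q => NCTensor.tmul R M Q (g v) q)
      (fun v v' q => by rw [map_add, NCTensor.tmul_add_left])
      (fun v q q' => by rw [NCTensor.tmul_add_right])
      (fun r v q => by rw [map_smul, NCTensor.tmul_smul]) with hγ
  have hfactor : (QuotientAddGroup.mk' S) = β.comp γ := by
    refine NCTensor.hom_ext fun v q => ?_
    rw [AddMonoidHom.comp_apply, hγ, NCTensor.lift_tmul, hβ, NCTensor.lift_tmul,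
      QuotientAddGroup.mk'_apply]
    exact (claim1 (sI (g v)) v q (hgsI _)).symm
  have hallS : ∀ z : NCTensor R (I →₀ Q) Q, z ∈ S := by
    intro z
    have h0 : γ z = 0 := Subsingleton.elim _ _
    have : QuotientAddGroup.mk' S z = 0 := by rw [hfactor, AddMonoidHom.comp_apply, h0, map_zero]
    rwa [QuotientAddGroup.mk'_apply, QuotientAddGroup.eq_zero_iff] at this
  -- the multiplication map θ : (I →₀ Q) ⊗ Q → M
  have hmr : ∀ (v : I →₀ Q) (q q' : Q),
      Finsupp.mapRange (· * (q + q')) (zero_mul _) v =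
      Finsupp.mapRange (· * q) (zero_mul _) v + Finsupp.mapRange (· * q') (zero_mul _) v := by
    intro v q q'
    ext i
    simp [Finsupp.mapRange_apply, mul_add]
  have hmsmul : ∀ (r : R) (v : I →₀ Q) (q : Q),
      Finsupp.mapRange (· * q) (zero_mul _) (op r • v) =
      Finsupp.mapRange (· * (r • q)) (zero_mul _) v := by
    intro r v q
    ext i
    simp only [Finsupp.mapRange_apply, Finsupp.smul_apply, hr, hl, mul_assoc]
  set θ : NCTensor R (I →₀ Q) Q →+ M :=
    NCTensor.lift (fun v q => g (Finsupp.mapRange (· * q) (zero_mul q) v))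
      (fun v v' q => by
        rw [Finsupp.mapRange_add (fun a b => add_mul a b q), map_add])
      (fun v q q' => by rw [hmr, map_add])
      (fun r v q => by rw [hmsmul]) with hθ
  have hθS : ∀ z ∈ S, θ z ∈ LinearMap.range h := by
    have : S ≤ ((LinearMap.range h).toAddSubgroup).comap θ := by
      refine (AddSubgroup.closure_le _).2 ?_
      rintro z ⟨x, hx0, q, rfl⟩
      simp only [Set.mem_preimage, AddSubgroup.coe_comap, SetLike.mem_coe,
        AddSubgroup.mem_comap]
      rw [hθ, NCTensor.lift_tmul]
      -- build the linear map Q →ₗ[Rᵐᵒᵖ] M, q ↦ g (x * q)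
      set f' : Q →ₗ[Rᵐᵒᵖ] M :=
        { toFun := fun q => g (Finsupp.mapRange (· * q) (zero_mul q) x)
          map_add' := fun q q' => by rw [hmr, map_add]
          map_smul' := fun c q => by
            dsimp only [RingHom.id_apply]
            have : Finsupp.mapRange (· * (c • q)) (zero_mul _) x =
                c • Finsupp.mapRange (· * q) (zero_mul _) x := by
              ext i
              simp only [Finsupp.mapRange_apply, Finsupp.smul_apply]
              conv_lhs => rw [← MulOpposite.op_unop c, hr]
              conv_rhs => rw [← MulOpposite.op_unop c, hr]
              rw [mul_assoc]
            rw [this, map_smul] } with hf'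
      have hker : phiRange φ hr ≤ LinearMap.ker f' := by
        rintro _ ⟨r, rfl⟩
        have : Finsupp.mapRange (· * φ r) (zero_mul _) x = op r • x := by
          ext i
          simp only [Finsupp.mapRange_apply, Finsupp.smul_apply, hr]
        rw [LinearMap.mem_ker, hf']
        dsimp only [LinearMap.coe_mk, AddHom.coe_mk]
        rw [this, map_smul, hx0, smul_zero]
      set f : Kmod φ hr →ₗ[Rᵐᵒᵖ] M := (phiRange φ hr).liftQ f' hker with hf
      refine ⟨Finsupp.single f ((phiRange φ hr).mkQ q), ?_⟩
      rw [hh, Finsupp.lsum_single, hf, Submodule.mkQ_apply, Submodule.liftQ_apply]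
      rfl
    intro z hz
    exact this hz
  -- conclude
  have hv : NCTensor.tmul R (I →₀ Q) Q (sI m) 1 ∈ S := hallS _
  have hm : θ (NCTensor.tmul R (I →₀ Q) Q (sI m) 1) = m := by
    rw [hθ, NCTensor.lift_tmul]
    have : Finsupp.mapRange (· * (1 : Q)) (zero_mul _) (sI m) = sI m := by
      ext i
      simp [Finsupp.mapRange_apply]
    rw [this, hgsI]
  obtain ⟨y, hy⟩ := hθS _ hv
  exact ⟨y, by rw [hy, hm]⟩

/-- If `φ : R → Q` is an injective ring epimorphism with `Q` flat as a left `R`-module and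
`K = Q/φ(R)`, then a right `R`-module `M` is torsion (`M ⊗_R Q = 0`) and h-divisible
(a quotient of a direct sum of copies of `Q`) iff `M` is generated by `K`
(a quotient of a direct sum of copies of `K`). -/
theorem torsion_hdivisible_iff_genK {R Q : Type u} [Ring R] [Ring Q] (φ : R →+* Q)
    (hinj : Function.Injective φ) (hepi : IsRingEpi φ)
    [Module Rᵐᵒᵖ Q] (hr : ∀ (r : R) (q : Q), op r • q = q * φ r)
    [Module R Q] (hl : ∀ (r : R) (q : Q), r • q = φ r * q)
    (hflat : IsFlatLeftModule R Q)
    (M : Type u) [AddCommGroup M] [Module Rᵐᵒᵖ M] :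
    (Subsingleton (NCTensor R M Q) ∧
      ∃ (I : Type u) (h : (I →₀ Q) →ₗ[Rᵐᵒᵖ] M), Function.Surjective h) ↔
    ∃ (I : Type u) (h : (I →₀ Kmod φ hr) →ₗ[Rᵐᵒᵖ] M), Function.Surjective h := by
  constructor
  · rintro ⟨hsub, I, g, hgs⟩
    exact genK_of_torsion_genQ φ hr hl hsub g hgs
  · rintro ⟨I, h, hs⟩
    refine ⟨subsingleton_of_genK φ hr hl hepi h hs, I, ?_⟩
    exact genQ_of_genK φ hr h hs
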